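/- Let c ≥ 2, n ≥ 1, m ≥ 1, A ∈ ℚ^{m×cn}, and let x, y ∈ ℚ^{cn} both satisfy the block constraints (entries of each length-c block sum to 1) and satisfy (A(p − x))_{|I} = 0 and (A(p − y))_{|I} = 0 for some fixed p ∈ ℚ^{cn} and index set I ⊆ {1,…,m}. Then for every λ ∈ ℚ, the point z = (1−λ)x + λy also satisfies the block constraints and (A(p − z))_{|I} = 0. Moreover, if 0 < x_j < 1 for all j in some nonempty set J and x_j = y_j for all j ∉ J, and x ≠ y, then there exists λ ∈ ℚ such that z ∈ [0,1]^{cn} and z has strictly more coordinates in {0,1} than x does. -/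

import Mathlib

/-- Affine-line step of the iterative rounding in the multi-color Beck–Fiala theorem:
every point on the line through two solutions of the linear system satisfies the block
constraints and the restricted equations, and if `x` is strictly fractional exactly on
`J` and agrees with `y` outside `J`, some point of the line lies in `[0,1]^{cn}` and has
strictly more coordinates in `{0,1}` than `x`. -/
theorem affine_rounding_step (m n c : ℕ) (hc : 2 ≤ c) (hn : 1 ≤ n) (hm : 1 ≤ m)
    (A : Matrix (Fin m) (Fin n × Fin c) ℚ) (p x y : Fin n × Fin c → ℚ)
    (I : Finset (Fin m))
    (hxb : ∀ b : Fin n, ∑ r : Fin c, x (b, r) = 1)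
    (hyb : ∀ b : Fin n, ∑ r : Fin c, y (b, r) = 1)
    (hxI : ∀ i ∈ I, ∑ j, A i j * (p j - x j) = 0)
    (hyI : ∀ i ∈ I, ∑ j, A i j * (p j - y j) = 0) :
    (∀ lam : ℚ,
      (∀ b : Fin n, ∑ r : Fin c, ((1 - lam) * x (b, r) + lam * y (b, r)) = 1) ∧
      ∀ i ∈ I, ∑ j, A i j * (p j - ((1 - lam) * x j + lam * y j)) = 0) ∧
    (∀ J : Finset (Fin n × Fin c), J.Nonempty →
      (∀ j ∈ J, 0 < x j ∧ x j < 1) → (∀ j ∉ J, x j = y j) → x ≠ y →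
      (∀ j, 0 ≤ x j ∧ x j ≤ 1) →
      ∃ lam : ℚ,
        (∀ j, 0 ≤ (1 - lam) * x j + lam * y j ∧ (1 - lam) * x j + lam * y j ≤ 1) ∧
        (Finset.univ.filter (fun j : Fin n × Fin c => x j = 0 ∨ x j = 1)).card <
          (Finset.univ.filter (fun j : Fin n × Fin c =>
            (1 - lam) * x j + lam * y j = 0 ∨ (1 - lam) * x j + lam * y j = 1)).card) := by
  constructor
  · intro lam
    constructor
    · intro b
      have h1 := hxb b
      have h2 := hyb b
      have : ∑ r : Fin c, ((1 - lam) * x (b, r) + lam * y (b, r))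
          = (1 - lam) * ∑ r : Fin c, x (b, r) + lam * ∑ r : Fin c, y (b, r) := by
        rw [Finset.mul_sum, Finset.mul_sum, ← Finset.sum_add_distrib]
      rw [this, h1, h2]; ring
    · intro i hi
      have h1 := hxI i hi
      have h2 := hyI i hi
      have : ∑ j, A i j * (p j - ((1 - lam) * x j + lam * y j))
          = (1 - lam) * ∑ j, A i j * (p j - x j) + lam * ∑ j, A i j * (p j - y j) := by
        rw [Finset.mul_sum, Finset.mul_sum, ← Finset.sum_add_distrib]
        exact Finset.sum_congr rfl fun j _ => by ring
      rw [this, h1, h2]; ring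
  · intro J hJne hJfrac hagree hxy hx01
    classical
    set S : Finset (Fin n × Fin c) := Finset.univ.filter (fun j => y j ≠ x j) with hS
    have hSne : S.Nonempty := by
      by_contra h
      apply hxy
      funext j
      by_contra hj
      exact h ⟨j, Finset.mem_filter.mpr ⟨Finset.mem_univ _, fun e => hj e.symm⟩⟩
    have hSJ : ∀ j ∈ S, j ∈ J := by
      intro j hj
      have hne : y j ≠ x j := (Finset.mem_filter.mp hj).2
      by_contra hjJ
      exact hne (hagree j hjJ).symm
    set f : Fin n × Fin c → ℚ :=
      fun j => if x j < y j then (1 - x j) / (y j - x j) else x j / (x j - y j) with hf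
    have hfval : ∀ j, f j = if x j < y j then (1 - x j) / (y j - x j) else x j / (x j - y j) :=
      fun j => rfl
    obtain ⟨j0, hj0S, hj0min⟩ := S.exists_min_image f hSne
    set lam := f j0 with hlam
    have hfpos : ∀ j ∈ S, 0 < f j := by
      intro j hj
      obtain ⟨hx0, hx1⟩ := hJfrac j (hSJ j hj)
      have hne : y j ≠ x j := (Finset.mem_filter.mp hj).2
      rw [hfval]
      by_cases hlt : x j < y j
      · rw [if_pos hlt]
        exact div_pos (by linarith) (by linarith)
      · rw [if_neg hlt]
        have : y j < x j := lt_of_le_of_ne (not_lt.mp hlt) hne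
        exact div_pos (by linarith) (by linarith)
    have hlampos : 0 < lam := hfpos j0 hj0S
    have hz : ∀ j, (1 - lam) * x j + lam * y j = x j + lam * (y j - x j) := fun j => by ring
    refine ⟨lam, ?_, ?_⟩
    · intro j
      rw [hz]
      by_cases hjS : j ∈ S
      · have hmin := hj0min j hjS
        obtain ⟨hx0, hx1⟩ := hJfrac j (hSJ j hjS)
        have hne : y j ≠ x j := (Finset.mem_filter.mp hjS).2
        by_cases hlt : x j < y j
        · have hfj : f j = (1 - x j) / (y j - x j) := by rw [hfval]; exact if_pos hlt
          have hd : 0 < y j - x j := by linarith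
          have hle : lam * (y j - x j) ≤ 1 - x j := by
            have := hmin
            rw [hfj] at this
            calc lam * (y j - x j) ≤ ((1 - x j) / (y j - x j)) * (y j - x j) := by
                  exact mul_le_mul_of_nonneg_right this (le_of_lt hd)
              _ = 1 - x j := by field_simp
          constructor
          · nlinarith
          · linarith
        · have hgt : y j < x j := lt_of_le_of_ne (not_lt.mp hlt) hne
          have hfj : f j = x j / (x j - y j) := by rw [hfval]; exact if_neg hlt
          have hd : 0 < x j - y j := by linarith
          have hle : lam * (x j - y j) ≤ x j := by
            have := hmin
            rw [hfj] at this
            calc lam * (x j - y j) ≤ (x j / (x j - y j)) * (x j - y j) := by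
                  exact mul_le_mul_of_nonneg_right this (le_of_lt hd)
              _ = x j := by field_simp
          constructor
          · nlinarith
          · nlinarith
      · have : y j = x j := by
          by_contra h
          exact hjS (Finset.mem_filter.mpr ⟨Finset.mem_univ _, h⟩)
        rw [this]
        obtain ⟨h0, h1⟩ := hx01 j
        constructor <;> nlinarith
    · have hzj0 : (1 - lam) * x j0 + lam * y j0 = 0 ∨ (1 - lam) * x j0 + lam * y j0 = 1 := by
        rw [hz]
        have hne : y j0 ≠ x j0 := (Finset.mem_filter.mp hj0S).2
        by_cases hlt : x j0 < y j0
        · right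
          have hfj : lam = (1 - x j0) / (y j0 - x j0) := by rw [hlam, hfval]; exact if_pos hlt
          have hd : y j0 - x j0 ≠ 0 := by intro h; linarith
          rw [hfj]
          field_simp
          ring
        · left
          have hgt : y j0 < x j0 := lt_of_le_of_ne (not_lt.mp hlt) hne
          have hfj : lam = x j0 / (x j0 - y j0) := by rw [hlam, hfval]; exact if_neg hlt
          have hd : x j0 - y j0 ≠ 0 := by intro h; linarith
          rw [hfj]
          field_simp
          ring
      obtain ⟨hx0, hx1⟩ := hJfrac j0 (hSJ j0 hj0S)
      apply Finset.card_lt_card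
      rw [Finset.ssubset_iff_of_subset]
      · refine ⟨j0, Finset.mem_filter.mpr ⟨Finset.mem_univ _, hzj0⟩, ?_⟩
        intro h
        rcases (Finset.mem_filter.mp h).2 with h | h <;> linarith
      · intro j hj
        obtain ⟨_, hj01⟩ := Finset.mem_filter.mp hj
        have hjJ : j ∉ J := by
          intro hjJ
          obtain ⟨h0, h1⟩ := hJfrac j hjJ
          rcases hj01 with h | h <;> linarith
        have hxy' : x j = y j := hagree j hjJ
        refine Finset.mem_filter.mpr ⟨Finset.mem_univ _, ?_⟩
        have : (1 - lam) * x j + lam * y j = x j := by rw [← hxy']; ring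
        rw [this]
        exact hj01
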